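/- For an odd prime p, the ((p-1)/2) × ((p-1)/2) matrix P_p whose (α,i) entry is P(⟨αi/p⟩), where P(x)=x(1-x) and ⟨x⟩ is the fractional part, is invertible. -/

import Mathlib

/-- `P x = x(1-x)` -/
noncomputable def Ptor (x : ℝ) : ℝ := x * (1 - x)

/-- The matrix `P_p` with `(α,i)` entry `P(⟨αi/p⟩)`, `α,i ∈ {1,…,(p-1)/2}`. -/
noncomputable def Pmatrix (p : ℕ) : Matrix (Fin ((p - 1) / 2)) (Fin ((p - 1) / 2)) ℝ :=
  fun α i => Ptor (Int.fract ((((α : ℕ) + 1) * ((i : ℕ) + 1) : ℝ) / p))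

open Finset Complex

namespace PmatrixAux

lemma bernoulli_two_eval (z : ℂ) :
    ((Polynomial.bernoulli 2).map (algebraMap ℚ ℂ)).eval z = z ^ 2 - z + 1 / 6 := by
  have h2 : bernoulli 2 = 1/6 := by
    rw [bernoulli_eq_bernoulli'_of_ne_one (by norm_num), bernoulli'_two]
  simp only [Polynomial.bernoulli, Finset.sum_range_succ, Finset.sum_range_zero, zero_add,
    Polynomial.map_add, Polynomial.map_monomial, Polynomial.eval_add, Polynomial.eval_monomial,
    bernoulli_zero, bernoulli_one, h2]
  norm_num
  ring

variable {p : ℕ} [NeZero p]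

/-- Complex version of `P(val b / p)`. -/
noncomputable def F (p : ℕ) [NeZero p] (b : ZMod p) : ℂ := ((Ptor ((b.val : ℝ) / p) : ℝ) : ℂ)

lemma F_zero : F p 0 = 0 := by simp [F, Ptor]

lemma F_neg (b : ZMod p) : F p (-b) = F p b := by
  rcases eq_or_ne b 0 with rfl | hb
  · simp
  · have hv : (-b).val = p - b.val := by
      rw [ZMod.neg_val, if_neg hb]
    have hle : b.val ≤ p := (b.val_lt).le
    have hp0 : (0:ℝ) < p := by exact_mod_cast (NeZero.pos p)
    simp only [F, hv, Ptor]
    rw [Nat.cast_sub hle]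
    field_simp
    ring

lemma F_natCast (n : ℕ) : F p (n : ZMod p) = ((Ptor ((n % p : ℕ) / p) : ℝ) : ℂ) := by
  simp [F, ZMod.val_natCast]

lemma F_matrix (α i : Fin ((p - 1) / 2)) :
    ((Pmatrix p α i : ℝ) : ℂ) = F p ((((α : ℕ) + 1) * ((i : ℕ) + 1) : ℕ) : ZMod p) := by
  rw [F_natCast]
  congr 2
  rw [Pmatrix]
  congr 1
  rw [show ((((α : ℕ) + 1) : ℝ) * (((i : ℕ) + 1)) : ℝ)
      = (((((α : ℕ) + 1) * ((i : ℕ) + 1) : ℕ)) : ℝ) by push_cast; ring]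
  rw [Int.fract_div_natCast_eq_div_natCast_mod]

/-- The character sum `S χ = ∑ γ, χ γ * P(γ/p)`. -/
noncomputable def S (p : ℕ) [NeZero p] (χ : DirichletCharacter ℂ p) : ℂ :=
  ∑ γ : ZMod p, χ γ * F p γ

lemma sum_char_mul_val (χ : DirichletCharacter ℂ p) (hp : 1 < p) (hχ : χ.Even) (hχ1 : χ ≠ 1) :
    ∑ j : ZMod p, χ j * ((j.val : ℂ)) = 0 := by
  have h0 : ∑ j : ZMod p, χ j = 0 := χ.sum_eq_zero_of_ne_one hχ1
  have key : ∑ j : ZMod p, χ j * ((j.val : ℂ))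
      = ∑ j : ZMod p, χ j * ((p : ℂ) - (j.val : ℂ)) := by
    rw [Fintype.sum_equiv (Equiv.neg (ZMod p)) (fun j => χ j * ((j.val : ℂ)))
      (fun j => χ (-j) * (((-j) : ZMod p).val : ℂ)) (fun j => by simp)]
    refine Finset.sum_congr rfl fun j _ => ?_
    rcases eq_or_ne j 0 with rfl | hj
    · have h0' : χ (0 : ZMod p) = 0 := by
        apply χ.map_nonunit
        haveI : Nontrivial (ZMod p) := ZMod.nontrivial_iff.mpr (by omega)
        exact not_isUnit_zero
      simp [h0']
    · have he : χ (-j) = χ j := hχ.to_fun j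
      rw [he, ZMod.neg_val, if_neg hj, Nat.cast_sub j.val_lt.le]
  have hsum : (∑ j : ZMod p, χ j * ((j.val : ℂ))) + ∑ j : ZMod p, χ j * ((j.val : ℂ))
      = ∑ j : ZMod p, (p : ℂ) * χ j := by
    nth_rewrite 1 [key]
    rw [← Finset.sum_add_distrib]
    exact Finset.sum_congr rfl fun j _ => by ring
  rw [← Finset.mul_sum, h0, mul_zero] at hsum
  exact add_self_eq_zero.mp hsum

lemma LFunction_neg_one_eq (hp : 1 < p) {χ : DirichletCharacter ℂ p}
    (hχ : χ.Even) (hχ1 : χ ≠ 1) :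
    χ.LFunction (-1) = (p : ℂ) / 2 * S p χ := by
  have hp0 : (p : ℂ) ≠ 0 := Nat.cast_ne_zero.mpr (NeZero.ne p)
  have hz : ∀ j : ZMod p, HurwitzZeta.hurwitzZeta (ZMod.toAddCircle j) (-1)
      = -1 / 2 * (((j.val : ℂ) / p) ^ 2 - ((j.val : ℂ) / p) + 1 / 6) := by
    intro j
    have hx : ((j.val : ℝ) / p) ∈ Set.Icc (0 : ℝ) 1 := by
      constructor
      · positivity
      · rw [div_le_one (by exact_mod_cast (NeZero.pos p))]
        exact_mod_cast j.val_lt.le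
    have := HurwitzZeta.hurwitzZeta_neg_nat (k := 1) one_ne_zero hx
    rw [ZMod.toAddCircle_apply]
    rw [show ((-1 : ℂ) = -(1 : ℕ)) by norm_num, this]
    rw [bernoulli_two_eval]
    push_cast
    norm_num
  have hL : χ.LFunction (-1) = (p : ℂ) ^ (1 : ℂ) *
      ∑ j : ZMod p, χ j * (-1 / 2 * (((j.val : ℂ) / p) ^ 2 - ((j.val : ℂ) / p) + 1 / 6)) := by
    rw [DirichletCharacter.LFunction, ZMod.LFunction]
    rw [neg_neg]
    congr 1
    exact Finset.sum_congr rfl fun j _ => by rw [hz j]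
  rw [hL, cpow_one]
  have h0 : ∑ j : ZMod p, χ j = 0 := χ.sum_eq_zero_of_ne_one hχ1
  have h1 : ∑ j : ZMod p, χ j * ((j.val : ℂ)) = 0 := sum_char_mul_val χ hp hχ hχ1
  have hS : S p χ = ∑ j : ZMod p, χ j * (((j.val : ℂ) / p) - ((j.val : ℂ) / p) ^ 2) := by
    refine Finset.sum_congr rfl fun j _ => ?_
    simp only [F, Ptor]
    push_cast
    ring
  rw [hS]
  rw [Finset.mul_sum, Finset.mul_sum]
  have expand : ∀ j : ZMod p,
      (p : ℂ) * (χ j * (-1 / 2 * (((j.val : ℂ) / p) ^ 2 - ((j.val : ℂ) / p) + 1 / 6)))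
      = (p : ℂ) / 2 * (χ j * (((j.val : ℂ) / p) - ((j.val : ℂ) / p) ^ 2))
        + ((p : ℂ) * (-1 / 12)) * χ j := by
    intro j
    field_simp
    ring
  rw [Finset.sum_congr rfl fun j _ => expand j]
  rw [Finset.sum_add_distrib, ← Finset.mul_sum, ← Finset.mul_sum, h0, mul_zero, add_zero]

lemma LFunction_neg_one_ne_zero (hp : p.Prime) {χ : DirichletCharacter ℂ p}
    (hχ : χ.Even) (hχ1 : χ ≠ 1) : χ.LFunction (-1) ≠ 0 := by
  haveI : Fact p.Prime := ⟨hp⟩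
  have hp1 : p ≠ 1 := hp.one_lt.ne'
  have hp0 : (p : ℂ) ≠ 0 := Nat.cast_ne_zero.mpr (NeZero.ne p)
  have hprim : χ.IsPrimitive := by
    rw [DirichletCharacter.isPrimitive_def]
    rcases hp.eq_one_or_self_of_dvd _ χ.conductor_dvd_level with h | h
    · exact absurd (χ.eq_one_iff_conductor_eq_one.mpr h) hχ1
    · exact h
  have hG : DirichletCharacter.gammaFactor χ (-1) ≠ 0 := by
    rw [hχ.gammaFactor_def, Ne, Complex.Gammaℝ_eq_zero_iff]
    rintro ⟨n, hn⟩
    rw [neg_inj] at hn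
    have : (1 : ℕ) = 2 * n := by exact_mod_cast hn
    omega
  have hC2 : DirichletCharacter.completedLFunction χ⁻¹ 2 ≠ 0 := by
    have hL2 : χ⁻¹.LFunction 2 ≠ 0 :=
      DirichletCharacter.LFunction_ne_zero_of_one_le_re χ⁻¹ (Or.inr (by norm_num)) (by norm_num)
    have heq := DirichletCharacter.LFunction_eq_completed_div_gammaFactor χ⁻¹ 2 (Or.inr hp1)
    intro h0
    rw [h0, zero_div] at heq
    exact hL2 heq
  have hroot : DirichletCharacter.rootNumber χ ≠ 0 := by
    rw [DirichletCharacter.rootNumber]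
    refine div_ne_zero (div_ne_zero ?_ (pow_ne_zero _ I_ne_zero)) ?_
    · refine gaussSum_ne_zero_of_nontrivial ?_ hχ1 (ZMod.isPrimitive_stdAddChar p)
      rw [ZMod.card]
      exact hp0
    · rw [Ne, cpow_eq_zero_iff]
      rintro ⟨h, -⟩
      exact hp0 h
  have hFE := hprim.completedLFunction_one_sub 2
  rw [show (1 : ℂ) - 2 = -1 by norm_num] at hFE
  have hCneg : DirichletCharacter.completedLFunction χ (-1) ≠ 0 := by
    rw [hFE]
    refine mul_ne_zero (mul_ne_zero ?_ hroot) hC2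
    rw [Ne, cpow_eq_zero_iff]
    rintro ⟨h, -⟩
    exact hp0 h
  have heq := DirichletCharacter.LFunction_eq_completed_div_gammaFactor χ (-1) (Or.inr hp1)
  rw [heq]
  exact div_ne_zero hCneg hG

lemma S_ne_zero (hp : p.Prime) {χ : DirichletCharacter ℂ p} (hχ : χ.Even) :
    S p χ ≠ 0 := by
  rcases eq_or_ne χ 1 with rfl | hχ1
  · have hS : S p 1 = ((∑ γ : ZMod p, if IsUnit γ then Ptor ((γ.val : ℝ) / p) else 0 : ℝ) : ℂ) := by
      rw [S, ofReal_sum]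
      refine Finset.sum_congr rfl fun γ _ => ?_
      by_cases h : IsUnit γ
      · rw [if_pos h, MulChar.one_apply h, one_mul]
        rfl
      · rw [if_neg h, MulChar.map_nonunit _ h, zero_mul, ofReal_zero]
    rw [hS, Ne, ofReal_eq_zero]
    have hppos : (0 : ℝ) < p := by exact_mod_cast hp.pos
    haveI : Fact (1 < p) := ⟨hp.one_lt⟩
    have hpos : (0 : ℝ) < ∑ γ : ZMod p, if IsUnit γ then Ptor ((γ.val : ℝ) / p) else 0 := by
      refine Finset.sum_pos' (fun γ _ => ?_) ⟨1, Finset.mem_univ _, ?_⟩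
      · by_cases h : IsUnit γ
        · rw [if_pos h]
          have h1 : (0 : ℝ) ≤ (γ.val : ℝ) / p := by positivity
          have h2 : (γ.val : ℝ) / p ≤ 1 := by
            rw [div_le_one hppos]
            exact_mod_cast γ.val_lt.le
          have := mul_nonneg h1 (by linarith : (0:ℝ) ≤ 1 - (γ.val : ℝ) / p)
          simpa [Ptor] using this
        · rw [if_neg h]
      · rw [if_pos isUnit_one, ZMod.val_one p, Ptor]
        have hlt : (1 : ℝ) / p < 1 := by
          rw [div_lt_one hppos]
          exact_mod_cast hp.one_lt
        have hgt : (0 : ℝ) < 1 / p := by positivity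
        nlinarith
    exact hpos.ne'
  · have h := LFunction_neg_one_ne_zero hp hχ hχ1
    rw [LFunction_neg_one_eq hp.one_lt hχ hχ1] at h
    intro h0
    rw [h0, mul_zero] at h
    exact h rfl

end PmatrixAux

theorem Pmatrix_invertible (p : ℕ) (hp : p.Prime) (hodd : Odd p) :
    IsUnit (Pmatrix p) := by
  open PmatrixAux in
  classical
  haveI : Fact p.Prime := ⟨hp⟩
  haveI : NeZero p := ⟨hp.pos.ne'⟩
  have hm2 : 2 * ((p - 1) / 2) + 1 = p := by
    obtain ⟨k, hk⟩ := hodd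
    omega
  set m := (p - 1) / 2 with hmdef
  rw [Matrix.isUnit_iff_isUnit_det, isUnit_iff_ne_zero]
  intro hdet
  obtain ⟨v, hv0, hv⟩ := Matrix.exists_mulVec_eq_zero_iff.mpr hdet
  apply hv0
  -- the representatives 1, …, m in `ZMod p`
  set e : Fin m → ZMod p := fun i => (((i : ℕ) + 1 : ℕ) : ZMod p) with he
  have hval : ∀ i : Fin m, (e i).val = (i : ℕ) + 1 := by
    intro i
    exact ZMod.val_cast_of_lt (by have := i.isLt; omega)
  have heinj : ∀ i j : Fin m, e i = e j → i = j := by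
    intro i j h
    have := congrArg ZMod.val h
    rw [hval, hval] at this
    exact Fin.ext (by omega)
  have he0 : ∀ i : Fin m, e i ≠ 0 := by
    intro i h
    have := congrArg ZMod.val h
    rw [hval, ZMod.val_zero] at this
    omega
  have hene : ∀ i j : Fin m, e i ≠ -e j := by
    intro i j h
    have hsum : ((((i : ℕ) + 1) + ((j : ℕ) + 1) : ℕ) : ZMod p) = 0 := by
      push_cast
      rw [show ((i : ℕ) : ZMod p) + 1 + (((j : ℕ) : ZMod p) + 1) = e i + e j by
        rw [he]; push_cast; ring]
      rw [h]
      ring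
    have := congrArg ZMod.val hsum
    rw [ZMod.val_cast_of_lt (by have := i.isLt; have := j.isLt; omega), ZMod.val_zero] at this
    omega
  -- the even function Φ on `ZMod p`
  set Φ : ZMod p → ℂ := fun a =>
    ∑ i : Fin m, (v i : ℂ) * ((if a = e i then 1 else 0) + (if a = -e i then 1 else 0)) with hΦ
  have hsum : ∀ G : ZMod p → ℂ, ∑ a : ZMod p, Φ a * G a
      = ∑ i : Fin m, (v i : ℂ) * (G (e i) + G (-e i)) := by
    intro G
    simp only [hΦ, Finset.sum_mul]
    rw [Finset.sum_comm]
    refine Finset.sum_congr rfl fun i _ => ?_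
    rw [Finset.sum_congr rfl (fun a _ => show (v i : ℂ) *
        ((if a = e i then 1 else 0) + (if a = -e i then 1 else 0)) * G a
        = (v i : ℂ) * (if a = e i then G a else 0)
          + (v i : ℂ) * (if a = -e i then G a else 0) from by split_ifs <;> ring)]
    rw [Finset.sum_add_distrib, ← Finset.mul_sum, ← Finset.mul_sum,
      Finset.sum_ite_eq' Finset.univ (e i) G, Finset.sum_ite_eq' Finset.univ (-e i) G,
      if_pos (Finset.mem_univ _), if_pos (Finset.mem_univ _), ← mul_add]
  have hΦe : ∀ i : Fin m, Φ (e i) = (v i : ℂ) := by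
    intro i
    simp only [hΦ]
    rw [Finset.sum_eq_single i]
    · rw [if_pos rfl, if_neg (hene i i), add_zero, mul_one]
    · intro j _ hji
      rw [if_neg (fun h => hji (heinj i j h).symm), if_neg (hene i j), add_zero, mul_zero]
    · intro h
      exact absurd (Finset.mem_univ i) h
  have hΦ0 : Φ 0 = 0 := by
    simp only [hΦ]
    refine Finset.sum_eq_zero fun i _ => ?_
    rw [if_neg (fun h => he0 i h.symm), if_neg (fun h => he0 i (neg_eq_zero.mp h.symm)),
      add_zero, mul_zero]
  -- the kernel relation
  have hker : ∀ α : Fin m, ∑ i : Fin m, (v i : ℂ) * F p (e i * e α) = 0 := by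
    intro α
    have h := congrFun hv α
    simp only [Matrix.mulVec, dotProduct, Pi.zero_apply] at h
    calc ∑ i : Fin m, (v i : ℂ) * F p (e i * e α)
        = ∑ i : Fin m, ((Pmatrix p α i : ℝ) : ℂ) * (v i : ℂ) := by
          refine Finset.sum_congr rfl fun i _ => ?_
          rw [F_matrix]
          rw [show ((((α : ℕ) + 1) * ((i : ℕ) + 1) : ℕ) : ZMod p) = e i * e α by
            rw [he]; push_cast; ring]
          ring
      _ = ((∑ i : Fin m, Pmatrix p α i * v i : ℝ) : ℂ) := by push_cast; rfl
      _ = 0 := by rw [h, ofReal_zero]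
  -- extension of the kernel relation to all of `ZMod p`
  have hker' : ∀ β : ZMod p, ∑ i : Fin m, (v i : ℂ) * F p (e i * β) = 0 := by
    intro β
    by_cases hβ : β = 0
    · subst hβ
      simp [F_zero]
    · have hβv0 : β.val ≠ 0 := fun h => hβ (by
        rw [← ZMod.natCast_zmod_val β, h, Nat.cast_zero])
      have hβvlt : β.val < p := β.val_lt
      by_cases hle : β.val ≤ m
      · -- β = e α with α = β.val - 1
        set α : Fin m := ⟨β.val - 1, by omega⟩ with hα
        have hβe : β = e α := by
          rw [he]
          simp only [hα]
          rw [show (β.val - 1) + 1 = β.val by omega, ZMod.natCast_zmod_val]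
        rw [hβe]
        exact hker α
      · -- β = -e α with α = p - β.val - 1
        set α : Fin m := ⟨p - β.val - 1, by omega⟩ with hα
        have hβe : β = -e α := by
          have : e α = -β := by
            rw [he]
            simp only [hα]
            rw [show (p - β.val - 1) + 1 = p - β.val by omega]
            have hnv : (-β).val = p - β.val := by rw [ZMod.neg_val, if_neg hβ]
            rw [← hnv, ZMod.natCast_zmod_val]
          rw [this, neg_neg]
        rw [hβe]
        rw [show ∑ i : Fin m, (v i : ℂ) * F p (e i * -e α)
            = ∑ i : Fin m, (v i : ℂ) * F p (e i * e α) from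
          Finset.sum_congr rfl fun i _ => by rw [mul_neg, F_neg]]
        exact hker α
  -- convolution with F vanishes
  have hconv : ∀ β : ZMod p, ∑ a : ZMod p, Φ a * F p (a * β) = 0 := by
    intro β
    rw [hsum (fun a => F p (a * β))]
    calc ∑ i : Fin m, (v i : ℂ) * (F p (e i * β) + F p (-e i * β))
        = 2 * ∑ i : Fin m, (v i : ℂ) * F p (e i * β) := by
          rw [Finset.mul_sum]
          refine Finset.sum_congr rfl fun i _ => ?_
          rw [neg_mul, F_neg]
          ring
      _ = 0 := by rw [hker' β, mul_zero]
  -- character sums annihilate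
  have hTS : ∀ χ : DirichletCharacter ℂ p,
      (∑ a : ZMod p, Φ a * χ a⁻¹) * S p χ = 0 := by
    intro χ
    have h2 : ∑ β : ZMod p, χ β * ∑ a : ZMod p, Φ a * F p (a * β) = 0 := by
      simp only [hconv, mul_zero, Finset.sum_const_zero]
    rw [← h2]
    have step1 : ∑ β : ZMod p, χ β * ∑ a : ZMod p, Φ a * F p (a * β)
        = ∑ a : ZMod p, ∑ β : ZMod p, χ β * (Φ a * F p (a * β)) := by
      rw [show ∑ β : ZMod p, χ β * ∑ a : ZMod p, Φ a * F p (a * β)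
          = ∑ β : ZMod p, ∑ a : ZMod p, χ β * (Φ a * F p (a * β)) from
        Finset.sum_congr rfl fun β _ => Finset.mul_sum _ _ _]
      exact Finset.sum_comm
    have step2 : ∀ a : ZMod p, ∑ β : ZMod p, χ β * (Φ a * F p (a * β))
        = (Φ a * χ a⁻¹) * S p χ := by
      intro a
      by_cases ha : a = 0
      · subst ha
        simp [hΦ0]
      · rw [Fintype.sum_equiv (Equiv.mulLeft₀ a ha) (fun β => χ β * (Φ a * F p (a * β)))
          (fun γ => χ (a⁻¹ * γ) * (Φ a * F p γ)) (fun β => by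
            show χ β * (Φ a * F p (a * β)) = χ (a⁻¹ * (a * β)) * (Φ a * F p (a * β))
            rw [inv_mul_cancel_left₀ ha])]
        rw [show ∑ γ : ZMod p, χ (a⁻¹ * γ) * (Φ a * F p γ)
            = ∑ γ : ZMod p, (Φ a * χ a⁻¹) * (χ γ * F p γ) from
          Finset.sum_congr rfl fun γ _ => by rw [map_mul]; ring]
        rw [← Finset.mul_sum]
        rfl
    rw [step1, Finset.sum_congr rfl fun a _ => step2 a, ← Finset.sum_mul]
  -- all the twisted sums vanish
  have hT : ∀ χ : DirichletCharacter ℂ p, ∑ a : ZMod p, Φ a * χ a⁻¹ = 0 := by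
    intro χ
    rcases χ.even_or_odd with hχ | hχ
    · exact (mul_eq_zero.mp (hTS χ)).resolve_right (S_ne_zero hp hχ)
    · -- χ odd : the sum vanishes by symmetry
      have hΦneg : ∀ a : ZMod p, Φ (-a) = Φ a := by
        intro a
        simp only [hΦ]
        refine Finset.sum_congr rfl fun i _ => ?_
        have h1 : (if -a = e i then (1:ℂ) else 0) = (if a = -e i then 1 else 0) :=
          if_congr ⟨fun h => by rw [← h, neg_neg], fun h => by rw [h, neg_neg]⟩ rfl rfl
        have h2 : (if -a = -e i then (1:ℂ) else 0) = (if a = e i then 1 else 0) :=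
          if_congr neg_inj rfl rfl
        rw [h1, h2, add_comm]
      have key : (∑ a : ZMod p, Φ a * χ a⁻¹) = -∑ a : ZMod p, Φ a * χ a⁻¹ := by
        nth_rewrite 1 [Fintype.sum_equiv (Equiv.neg (ZMod p)) (fun a => Φ a * χ a⁻¹)
          (fun a => Φ (-a) * χ (-a)⁻¹) (fun a => by simp)]
        rw [← Finset.sum_neg_distrib]
        refine Finset.sum_congr rfl fun a _ => ?_
        rw [hΦneg a, inv_neg, show χ (-a⁻¹) = χ (-1) * χ a⁻¹ from by
          rw [← map_mul]; ring_nf, hχ]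
        ring
      have h2T : (2 : ℂ) * (∑ a : ZMod p, Φ a * χ a⁻¹) = 0 := by linear_combination key
      exact (mul_eq_zero.mp h2T).resolve_left two_ne_zero
  -- orthogonality of characters finishes the proof
  have htot : ((p.totient : ℂ)) ≠ 0 := by
    exact_mod_cast Nat.cast_ne_zero.mpr (Nat.totient_pos.mpr hp.pos).ne'
  have hvz : ∀ i0 : Fin m, (v i0 : ℂ) = 0 := by
    intro i0
    have h0 : ∑ χ : DirichletCharacter ℂ p, (∑ a : ZMod p, Φ a * χ a⁻¹) * χ (e i0) = 0 := by
      simp only [hT, zero_mul, Finset.sum_const_zero]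
    have key : ∑ χ : DirichletCharacter ℂ p, (∑ a : ZMod p, Φ a * χ a⁻¹) * χ (e i0)
        = ∑ a : ZMod p, Φ a * ∑ χ : DirichletCharacter ℂ p, χ a⁻¹ * χ (e i0) := by
      rw [show ∑ χ : DirichletCharacter ℂ p, (∑ a : ZMod p, Φ a * χ a⁻¹) * χ (e i0)
          = ∑ χ : DirichletCharacter ℂ p, ∑ a : ZMod p, Φ a * (χ a⁻¹ * χ (e i0)) from
        Finset.sum_congr rfl fun χ _ => by
          rw [Finset.sum_mul]
          exact Finset.sum_congr rfl fun a _ => by ring]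
      rw [Finset.sum_comm]
      exact Finset.sum_congr rfl fun a _ => (Finset.mul_sum _ _ _).symm
    rw [key] at h0
    have inner : ∀ a : ZMod p, Φ a * ∑ χ : DirichletCharacter ℂ p, χ a⁻¹ * χ (e i0)
        = if a = e i0 then Φ a * (p.totient : ℂ) else 0 := by
      intro a
      by_cases ha : a = 0
      · subst ha
        rw [hΦ0, zero_mul, if_neg (fun h => he0 i0 h.symm)]
      · rw [DirichletCharacter.sum_char_inv_mul_char_eq ℂ (Ne.isUnit ha) (e i0)]
        split_ifs with h
        · rfl
        · rw [mul_zero]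
    rw [Finset.sum_congr rfl fun a _ => inner a, Finset.sum_ite_eq' Finset.univ (e i0)
      (fun a => Φ a * (p.totient : ℂ)), if_pos (Finset.mem_univ _), hΦe] at h0
    exact (mul_eq_zero.mp h0).resolve_right htot
  refine funext fun i0 => ?_
  have := hvz i0
  exact_mod_cast this
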